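/- For r ≥ 1 and s ≥ 2, let D_s^r be the graph obtained from two disjoint stars K_{1,s} and a path P_{2r} by identifying the two endpoints of the path with the two star centers. Then the minimum vertex cover of D_s^r has size r+1 and the minimum independent vertex cover has size r+s. -/
import Mathlib


open SimpleGraph

/-- `S` is an independent set of `G`. -/
def IsIS {V : Type*} (G : SimpleGraph V) (S : Set V) : Prop :=
  S.Pairwise fun u v => ¬ G.Adj u v

/-- `G` contains no induced subgraph isomorphic to `H`. -/
def HFree {W V : Type*} (H : SimpleGraph W) (G : SimpleGraph V) : Prop :=
  IsEmpty (H ↪g G)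

/-- `G` is bipartite: the vertex set splits into two independent sets. -/
def IsBip {V : Type*} (G : SimpleGraph V) : Prop :=
  ∃ X : Set V, IsIS G X ∧ IsIS G Xᶜ

/-- `S` is a vertex cover of `G`. -/
def IsVC {V : Type*} (G : SimpleGraph V) (S : Finset V) : Prop :=
  ∀ ⦃u v⦄, G.Adj u v → u ∈ S ∨ v ∈ S

/-- minimum size of a vertex cover. -/
noncomputable def vc {V : Type*} (G : SimpleGraph V) : ℕ :=
  sInf {n | ∃ S : Finset V, IsVC G S ∧ S.card = n}

/-- minimum size of an independent vertex cover. -/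
noncomputable def ivc {V : Type*} (G : SimpleGraph V) : ℕ :=
  sInf {n | ∃ S : Finset V, IsVC G S ∧ IsIS G ↑S ∧ S.card = n}

/-- The graph `D_s^r`: two disjoint stars `K_{1,s}` whose centres are the two
endpoints of a path on `2r` vertices.  The path vertices are `Sum.inl i` for
`i : Fin (2r)` (with `Sum.inl 0` and the last path vertex the star centres),
and the leaves of the two stars are `Sum.inr (Sum.inl a)` and
`Sum.inr (Sum.inr b)` respectively. -/
def Dsr (r s : ℕ) : SimpleGraph (Fin (2 * r) ⊕ Fin s ⊕ Fin s) :=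
  SimpleGraph.fromRel fun u v =>
    (∃ i j : Fin (2 * r), u = Sum.inl i ∧ v = Sum.inl j ∧ (j : ℕ) = (i : ℕ) + 1) ∨
    (∃ i : Fin (2 * r), (i : ℕ) = 0 ∧ ∃ a : Fin s, u = Sum.inl i ∧ v = Sum.inr (Sum.inl a)) ∨
    (∃ i : Fin (2 * r), (i : ℕ) = 2 * r - 1 ∧ ∃ b : Fin s, u = Sum.inl i ∧ v = Sum.inr (Sum.inr b))

variable {r s : ℕ}

lemma adj_path {i j : Fin (2*r)} (h : (j:ℕ) = i + 1) :
    (Dsr r s).Adj (Sum.inl i) (Sum.inl j) := by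
  rw [Dsr, SimpleGraph.fromRel_adj]
  refine ⟨by simp [Fin.ext_iff]; omega, Or.inl ?_⟩
  exact Or.inl ⟨i, j, rfl, rfl, h⟩

lemma adj_star0 {i : Fin (2*r)} (h : (i:ℕ) = 0) (a : Fin s) :
    (Dsr r s).Adj (Sum.inl i) (Sum.inr (Sum.inl a)) := by
  rw [Dsr, SimpleGraph.fromRel_adj]
  exact ⟨by simp, Or.inl <| Or.inr <| Or.inl ⟨i, h, a, rfl, rfl⟩⟩

lemma adj_starE {i : Fin (2*r)} (h : (i:ℕ) = 2*r - 1) (b : Fin s) :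
    (Dsr r s).Adj (Sum.inl i) (Sum.inr (Sum.inr b)) := by
  rw [Dsr, SimpleGraph.fromRel_adj]
  exact ⟨by simp, Or.inl <| Or.inr <| Or.inr ⟨i, h, b, rfl, rfl⟩⟩

-- elimination: full characterization
lemma adj_cases {u v : Fin (2*r) ⊕ Fin s ⊕ Fin s} (h : (Dsr r s).Adj u v) :
    (∃ i j : Fin (2*r), u = Sum.inl i ∧ v = Sum.inl j ∧
      ((j:ℕ) = i + 1 ∨ (i:ℕ) = j + 1)) ∨
    (∃ i : Fin (2*r), (i:ℕ) = 0 ∧ ∃ a : Fin s,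
      (u = Sum.inl i ∧ v = Sum.inr (Sum.inl a)) ∨ (v = Sum.inl i ∧ u = Sum.inr (Sum.inl a))) ∨
    (∃ i : Fin (2*r), (i:ℕ) = 2*r - 1 ∧ ∃ b : Fin s,
      (u = Sum.inl i ∧ v = Sum.inr (Sum.inr b)) ∨ (v = Sum.inl i ∧ u = Sum.inr (Sum.inr b))) := by
  rw [Dsr, SimpleGraph.fromRel_adj] at h
  obtain ⟨-, h | h⟩ := h
  · rcases h with ⟨i, j, h1, h2, h3⟩ | ⟨i, h1, a, h2, h3⟩ | ⟨i, h1, b, h2, h3⟩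
    · exact Or.inl ⟨i, j, h1, h2, Or.inl h3⟩
    · exact Or.inr <| Or.inl ⟨i, h1, a, Or.inl ⟨h2, h3⟩⟩
    · exact Or.inr <| Or.inr ⟨i, h1, b, Or.inl ⟨h2, h3⟩⟩
  · rcases h with ⟨i, j, h1, h2, h3⟩ | ⟨i, h1, a, h2, h3⟩ | ⟨i, h1, b, h2, h3⟩
    · exact Or.inl ⟨j, i, h2, h1, Or.inr h3⟩
    · exact Or.inr <| Or.inl ⟨i, h1, a, Or.inr ⟨h2, h3⟩⟩
    · exact Or.inr <| Or.inr ⟨i, h1, b, Or.inr ⟨h2, h3⟩⟩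

/-- label used for the matching argument for `vc`. -/
def lab (r s : ℕ) : (Fin (2*r) ⊕ Fin s ⊕ Fin s) → ℕ
  | .inl i => ((i : ℕ) + 1) / 2
  | .inr (.inl _) => 0
  | .inr (.inr _) => r

lemma vc_lower (hr : 1 ≤ r) (hs : 1 ≤ s) {S : Finset (Fin (2*r) ⊕ Fin s ⊕ Fin s)}
    (hS : IsVC (Dsr r s) S) : r + 1 ≤ S.card := by
  have himg : ∀ k < r + 1, k ∈ S.image (lab r s) := by
    intro k hk
    rcases Nat.eq_zero_or_pos k with rfl | hk0
    · have hadj := adj_star0 (i := (⟨0, by omega⟩ : Fin (2*r))) rfl (⟨0, by omega⟩ : Fin s)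
      rcases hS hadj with h | h
      · exact Finset.mem_image.2 ⟨_, h, by simp [lab]⟩
      · exact Finset.mem_image.2 ⟨_, h, rfl⟩
    rcases eq_or_lt_of_le (show k + 1 ≤ r + 1 from hk) with hkr | hkr
    · -- k = r
      have hkr' : k = r := by omega
      subst hkr'
      have hadj := adj_starE (i := (⟨2*k - 1, by omega⟩ : Fin (2*k))) rfl (⟨0, by omega⟩ : Fin s)
      rcases hS hadj with h | h
      · refine Finset.mem_image.2 ⟨_, h, ?_⟩; simp [lab]; omega
      · exact Finset.mem_image.2 ⟨_, h, rfl⟩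
    · -- 0 < k < r
      have hk1 : k < r := by omega
      have hadj := adj_path (r := r) (s := s) (i := ⟨2*k - 1, by omega⟩) (j := ⟨2*k, by omega⟩)
        (by simp; omega)
      rcases hS hadj with h | h
      · refine Finset.mem_image.2 ⟨_, h, ?_⟩; simp [lab]; omega
      · refine Finset.mem_image.2 ⟨_, h, ?_⟩; simp [lab]; omega
  calc r + 1 = (Finset.range (r+1)).card := by simp
    _ ≤ (S.image (lab r s)).card := by
        apply Finset.card_le_card
        intro k hk
        exact himg k (Finset.mem_range.1 hk)
    _ ≤ S.card := Finset.card_image_le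

/-- the optimal vertex cover: even path vertices together with the last path vertex. -/
def Tvc (r s : ℕ) (hr : 1 ≤ r) : Finset (Fin (2*r) ⊕ Fin s ⊕ Fin s) :=
  Finset.image (fun k : Fin (r+1) =>
    Sum.inl ⟨min (2*(k:ℕ)) (2*r-1), by omega⟩) Finset.univ

lemma mem_Tvc {hr : 1 ≤ r} {i : Fin (2*r)} (k : ℕ) (hk : k ≤ r)
    (h : min (2*k) (2*r-1) = (i:ℕ)) :
    (Sum.inl i : Fin (2*r) ⊕ Fin s ⊕ Fin s) ∈ Tvc r s hr :=
  Finset.mem_image.2 ⟨⟨k, by omega⟩, Finset.mem_univ _, by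
    simp only [Sum.inl.injEq, Fin.ext_iff]; simpa using h⟩

lemma card_Tvc (hr : 1 ≤ r) : (Tvc r s hr).card = r + 1 := by
  rw [Tvc, Finset.card_image_of_injective _ ?_, Finset.card_univ, Fintype.card_fin]
  intro a b hab
  simp only [Sum.inl.injEq, Fin.mk.injEq] at hab
  have ha := a.2; have hb := b.2
  exact Fin.ext (by omega)

lemma Tvc_isVC (hr : 1 ≤ r) : IsVC (Dsr r s) (Tvc r s hr) := by
  intro u v hadj
  rcases adj_cases hadj with ⟨i, j, rfl, rfl, hij⟩ |
    ⟨i, hi, a, ⟨rfl, rfl⟩ | ⟨rfl, rfl⟩⟩ | ⟨i, hi, b, ⟨rfl, rfl⟩ | ⟨rfl, rfl⟩⟩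
  · have hi2 := i.2; have hj2 := j.2
    rcases hij with h | h
    · rcases Nat.even_or_odd (i:ℕ) with ⟨c, hc⟩ | ⟨c, hc⟩
      · exact Or.inl (mem_Tvc ((i:ℕ)/2) (by omega) (by omega))
      · exact Or.inr (mem_Tvc ((j:ℕ)/2) (by omega) (by omega))
    · rcases Nat.even_or_odd (j:ℕ) with ⟨c, hc⟩ | ⟨c, hc⟩
      · exact Or.inr (mem_Tvc ((j:ℕ)/2) (by omega) (by omega))
      · exact Or.inl (mem_Tvc ((i:ℕ)/2) (by omega) (by omega))
  · exact Or.inl (mem_Tvc 0 (by omega) (by omega))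
  · exact Or.inr (mem_Tvc 0 (by omega) (by omega))
  · exact Or.inl (mem_Tvc r (by omega) (by omega))
  · exact Or.inr (mem_Tvc r (by omega) (by omega))

/-- the optimal independent vertex cover: even path vertices and the far star's leaves. -/
def Sivc (r s : ℕ) : Finset (Fin (2*r) ⊕ Fin s ⊕ Fin s) :=
  Finset.image (fun k : Fin r => Sum.inl ⟨2*(k:ℕ), by omega⟩) Finset.univ ∪
  Finset.image (fun b : Fin s => Sum.inr (Sum.inr b)) Finset.univ

lemma mem_Sivc {v : Fin (2*r) ⊕ Fin s ⊕ Fin s} :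
    v ∈ Sivc r s ↔ (∃ i : Fin (2*r), v = Sum.inl i ∧ (i:ℕ) % 2 = 0) ∨
      (∃ b : Fin s, v = Sum.inr (Sum.inr b)) := by
  constructor
  · intro hv
    rcases Finset.mem_union.1 hv with h | h
    · obtain ⟨k, -, rfl⟩ := Finset.mem_image.1 h
      exact Or.inl ⟨_, rfl, by simp [Nat.mul_mod_right]⟩
    · obtain ⟨b, -, rfl⟩ := Finset.mem_image.1 h
      exact Or.inr ⟨b, rfl⟩
  · rintro (⟨i, rfl, hi⟩ | ⟨b, rfl⟩)
    · have h2 := i.2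
      refine Finset.mem_union.2 (Or.inl (Finset.mem_image.2
        ⟨⟨(i:ℕ)/2, by omega⟩, Finset.mem_univ _, ?_⟩))
      simp only [Sum.inl.injEq]
      exact Fin.ext (by simp; omega)
    · exact Finset.mem_union.2 (Or.inr (Finset.mem_image.2 ⟨b, Finset.mem_univ _, rfl⟩))

lemma card_Sivc : (Sivc r s).card = r + s := by
  rw [Sivc, Finset.card_union_of_disjoint, Finset.card_image_of_injective,
    Finset.card_image_of_injective] <;>
  first
  | simp
  | (intro a b hab; simp only [Sum.inl.injEq, Sum.inr.injEq, Fin.mk.injEq] at hab;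
     exact Fin.ext (by omega))
  | (simp only [Finset.disjoint_left, Finset.mem_image]
     rintro x ⟨k, -, rfl⟩ ⟨b, -, h⟩
     exact absurd h (by simp))

lemma Sivc_isVC (hr : 1 ≤ r) : IsVC (Dsr r s) (Sivc r s) := by
  intro u v hadj
  rcases adj_cases hadj with ⟨i, j, rfl, rfl, hij⟩ |
    ⟨i, hi, a, ⟨rfl, rfl⟩ | ⟨rfl, rfl⟩⟩ | ⟨i, hi, b, ⟨rfl, rfl⟩ | ⟨rfl, rfl⟩⟩
  · have hi2 := i.2; have hj2 := j.2
    rcases Nat.even_or_odd (i:ℕ) with ⟨c, hc⟩ | ⟨c, hc⟩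
    · exact Or.inl (mem_Sivc.2 (Or.inl ⟨i, rfl, by omega⟩))
    · exact Or.inr (mem_Sivc.2 (Or.inl ⟨j, rfl, by omega⟩))
  · exact Or.inl (mem_Sivc.2 (Or.inl ⟨i, rfl, by omega⟩))
  · exact Or.inr (mem_Sivc.2 (Or.inl ⟨i, rfl, by omega⟩))
  · exact Or.inr (mem_Sivc.2 (Or.inr ⟨b, rfl⟩))
  · exact Or.inl (mem_Sivc.2 (Or.inr ⟨b, rfl⟩))

lemma Sivc_isIS (hr : 1 ≤ r) : IsIS (Dsr r s) ↑(Sivc r s) := by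
  intro u hu v hv hne hadj
  rw [Finset.mem_coe, mem_Sivc] at hu hv
  rcases adj_cases hadj with ⟨i, j, hu', hv', hij⟩ |
    ⟨i, hi, a, ⟨hu', hv'⟩ | ⟨hv', hu'⟩⟩ | ⟨i, hi, b, ⟨hu', hv'⟩ | ⟨hv', hu'⟩⟩ <;>
    subst hu' <;> subst hv'
  · rcases hu with ⟨i', hi', hpar⟩ | ⟨b, hb⟩
    · rcases hv with ⟨j', hj', hpar'⟩ | ⟨b, hb⟩
      · obtain rfl : i = i' := Sum.inl.inj hi'
        obtain rfl : j = j' := Sum.inl.inj hj'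
        omega
      · exact absurd hb (by simp)
    · exact absurd hb (by simp)
  · rcases hv with ⟨j', hj', hpar'⟩ | ⟨b, hb⟩
    · exact absurd hj' (by simp)
    · exact absurd hb (by simp)
  · rcases hu with ⟨j', hj', hpar'⟩ | ⟨b, hb⟩
    · exact absurd hj' (by simp)
    · exact absurd hb (by simp)
  · rcases hu with ⟨i', hi', hpar⟩ | ⟨b', hb⟩
    · obtain rfl : i = i' := Sum.inl.inj hi'
      omega
    · exact absurd hb (by simp)
  · rcases hv with ⟨i', hi', hpar⟩ | ⟨b', hb⟩
    · obtain rfl : i = i' := Sum.inl.inj hi'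
      omega
    · exact absurd hb (by simp)

def lab2 (r s : ℕ) : (Fin (2*r) ⊕ Fin s ⊕ Fin s) → ℕ
  | .inl i => (i : ℕ) / 2
  | .inr _ => r

lemma ivc_lower (hr : 1 ≤ r) (hs : 1 ≤ s) {S : Finset (Fin (2*r) ⊕ Fin s ⊕ Fin s)}
    (hVC : IsVC (Dsr r s) S) (hIS : IsIS (Dsr r s) ↑S) : r + s ≤ S.card := by
  classical
  -- parity structure when the first centre is in S
  have key : ∀ j : ℕ, ∀ hj : j < 2*r,
      (Sum.inl (⟨0, by omega⟩ : Fin (2*r)) : Fin (2*r) ⊕ Fin s ⊕ Fin s) ∈ S →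
      ((j % 2 = 0 → Sum.inl (⟨j, hj⟩ : Fin (2*r)) ∈ S) ∧
       (j % 2 = 1 → Sum.inl (⟨j, hj⟩ : Fin (2*r)) ∉ S)) := by
    intro j
    induction j with
    | zero => exact fun hj h0 => ⟨fun _ => h0, fun h => by omega⟩
    | succ n ih =>
      intro hj h0
      have hn := ih (by omega) h0
      have hadj : (Dsr r s).Adj (Sum.inl ⟨n, by omega⟩) (Sum.inl ⟨n+1, hj⟩) :=
        adj_path (by simp)
      have hne : (Sum.inl (⟨n, by omega⟩ : Fin (2*r)) : Fin (2*r) ⊕ Fin s ⊕ Fin s) ≠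
          Sum.inl ⟨n+1, hj⟩ := by
        simp only [ne_eq, Sum.inl.injEq, Fin.mk.injEq]; omega
      constructor
      · intro hpar
        rcases hVC hadj with h | h
        · exact absurd h (hn.2 (by omega))
        · exact h
      · intro hpar hmem
        exact hIS (Finset.mem_coe.2 (hn.1 (by omega))) (Finset.mem_coe.2 hmem) hne hadj
  -- one of the two centres is missing from S
  have hcase : (Sum.inl (⟨0, by omega⟩ : Fin (2*r)) : Fin (2*r) ⊕ Fin s ⊕ Fin s) ∉ S ∨
      (Sum.inl (⟨2*r-1, by omega⟩ : Fin (2*r)) : Fin (2*r) ⊕ Fin s ⊕ Fin s) ∉ S := by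
    by_cases h0 : (Sum.inl (⟨0, by omega⟩ : Fin (2*r)) : Fin (2*r) ⊕ Fin s ⊕ Fin s) ∈ S
    · exact Or.inr ((key (2*r-1) (by omega) h0).2 (by omega))
    · exact Or.inl h0
  -- the path alone forces r vertices
  have hpath : r ≤ (S.filter (fun v => v.isLeft = true)).card := by
    have himg : ∀ k < r, k ∈ (S.filter (fun v => v.isLeft = true)).image (lab2 r s) := by
      intro k hk
      have hadj : (Dsr r s).Adj (Sum.inl ⟨2*k, by omega⟩) (Sum.inl ⟨2*k+1, by omega⟩) :=
        adj_path (by simp)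
      rcases hVC hadj with h | h
      · exact Finset.mem_image.2 ⟨_, Finset.mem_filter.2 ⟨h, rfl⟩, by simp only [lab2]; omega⟩
      · exact Finset.mem_image.2 ⟨_, Finset.mem_filter.2 ⟨h, rfl⟩, by simp only [lab2]; omega⟩
    calc r = (Finset.range r).card := by simp
      _ ≤ ((S.filter (fun v => v.isLeft = true)).image (lab2 r s)).card :=
          Finset.card_le_card fun k hk => himg k (Finset.mem_range.1 hk)
      _ ≤ _ := Finset.card_image_le
  -- the leaves of a star whose centre is missing force s vertices
  have hleaves : s ≤ (S.filter (fun v => ¬ v.isLeft = true)).card := by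
    rcases hcase with hc | hc
    · have hleaf : ∀ a : Fin s, (Sum.inr (Sum.inl a) : Fin (2*r) ⊕ Fin s ⊕ Fin s) ∈ S := by
        intro a
        rcases hVC (adj_star0 (i := (⟨0, by omega⟩ : Fin (2*r))) rfl a) with h | h
        · exact absurd h hc
        · exact h
      calc s = (Finset.univ.image
            (fun a : Fin s => (Sum.inr (Sum.inl a) : Fin (2*r) ⊕ Fin s ⊕ Fin s))).card := by
            rw [Finset.card_image_of_injective _ (fun a b hab => by simpa using hab)]; simp
        _ ≤ _ := Finset.card_le_card (by
            rintro x hx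
            obtain ⟨a, -, rfl⟩ := Finset.mem_image.1 hx
            exact Finset.mem_filter.2 ⟨hleaf a, by simp⟩)
    · have hleaf : ∀ b : Fin s, (Sum.inr (Sum.inr b) : Fin (2*r) ⊕ Fin s ⊕ Fin s) ∈ S := by
        intro b
        rcases hVC (adj_starE (i := (⟨2*r-1, by omega⟩ : Fin (2*r))) rfl b) with h | h
        · exact absurd h hc
        · exact h
      calc s = (Finset.univ.image
            (fun b : Fin s => (Sum.inr (Sum.inr b) : Fin (2*r) ⊕ Fin s ⊕ Fin s))).card := by
            rw [Finset.card_image_of_injective _ (fun a b hab => by simpa using hab)]; simp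
        _ ≤ _ := Finset.card_le_card (by
            rintro x hx
            obtain ⟨b, -, rfl⟩ := Finset.mem_image.1 hx
            exact Finset.mem_filter.2 ⟨hleaf b, by simp⟩)
  have := Finset.card_filter_add_card_filter_not
    (s := S) (p := fun v => v.isLeft = true)
  omega


theorem stmt_10 (r s : ℕ) (hr : 1 ≤ r) (hs : 2 ≤ s) :
    vc (Dsr r s) = r + 1 ∧ ivc (Dsr r s) = r + s := by
  constructor
  · refine le_antisymm (Nat.sInf_le ⟨Tvc r s hr, Tvc_isVC hr, card_Tvc hr⟩) ?_
    refine le_csInf ⟨r + 1, Tvc r s hr, Tvc_isVC hr, card_Tvc hr⟩ ?_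
    rintro n ⟨S, hS, rfl⟩
    exact vc_lower hr (by omega) hS
  · refine le_antisymm (Nat.sInf_le ⟨Sivc r s, Sivc_isVC hr, Sivc_isIS hr, card_Sivc⟩) ?_
    refine le_csInf ⟨r + s, Sivc r s, Sivc_isVC hr, Sivc_isIS hr, card_Sivc⟩ ?_
    rintro n ⟨S, hS, hIS, rfl⟩
    exact ivc_lower hr (by omega) hS hIS
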